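/- Let G be a finite simple graph on n ≥ 2 vertices that is not the complete graph K_n. Then there is exactly one real b > √2 satisfying both: (i) C_G(s) ≠ 0 for all s in the open interval (1, b²/2), and (ii) G admits a two-distance representation in ℝ^{n−1} with distances √2 and b whose image lies on the unit sphere centered at the origin of ℝ^{n−1}. (Thus every non-complete graph has a J-spherical representation, and it is unique.) -/

import Mathlib

open scoped Classical RealInnerProductSpace

noncomputable section

/-- A two-distance representation of a simple graph `G` in `ℝ^d`
(`= EuclideanSpace ℝ (Fin d)`) with distances `a` and `b`, `0 < a ≤ b`: adjacent vertices
are mapped to points at distance `a`, distinct non-adjacent vertices to points at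
distance `b`. -/
def IsTwoDistRep {V : Type*} (G : SimpleGraph V) {d : ℕ}
    (f : V → EuclideanSpace ℝ (Fin d)) (a b : ℝ) : Prop :=
  0 < a ∧ a ≤ b ∧
    (∀ u v, G.Adj u v → dist (f u) (f v) = a) ∧
    (∀ u v, u ≠ v → ¬ G.Adj u v → dist (f u) (f v) = b)

/-- The Euclidean representation number `dim^E_2(G)`: the smallest `d` such that `G` has a
two-distance representation in `ℝ^d`. -/
def dimE2 {V : Type*} (G : SimpleGraph V) : ℕ :=
  sInf {d | ∃ (f : V → EuclideanSpace ℝ (Fin d)) (a b : ℝ), IsTwoDistRep G f a b}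

/-- The spherical representation number `dim^S_2(G)`: the smallest `d` such that `G` has a
two-distance representation in `ℝ^d` whose image lies on a sphere. -/
def dimS2 {V : Type*} (G : SimpleGraph V) : ℕ :=
  sInf {d | ∃ (f : V → EuclideanSpace ℝ (Fin d)) (a b : ℝ)
      (c : EuclideanSpace ℝ (Fin d)) (r : ℝ),
    IsTwoDistRep G f a b ∧ ∀ v, dist c (f v) = r}

/-- The J-spherical representation number `dim^J_2(G)`: the smallest `d` such that `G` has a
two-distance representation in `ℝ^d` with distances `√2` and `b` (`√2 ≤ b`) whose image lies
on the unit sphere centered at the origin. -/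
def dimJ2 {V : Type*} (G : SimpleGraph V) : ℕ :=
  sInf {d | ∃ (f : V → EuclideanSpace ℝ (Fin d)) (b : ℝ),
    IsTwoDistRep G f (Real.sqrt 2) b ∧ ∀ v, ‖f v‖ = 1}

/-- `β_*(G)`: the second distance of the (unique) J-spherical representation of `G` in
dimension `dimJ2 G`. -/
def betaStar {V : Type*} (G : SimpleGraph V) : ℝ :=
  sInf {b : ℝ | ∃ f : V → EuclideanSpace ℝ (Fin (dimJ2 G)),
    IsTwoDistRep G f (Real.sqrt 2) b ∧ ∀ v, ‖f v‖ = 1}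

/-- The Cayley–Menger matrix of a graph, with entries in `ℝ[X]`: the extra index `none`
gives the row and column of `1`s (with `0` in the corner), and for distinct vertices `u, v`
the entry is `1` if they are adjacent and `X` (the variable `t`) otherwise. -/
def cmMatrix {V : Type*} [Fintype V] (G : SimpleGraph V) :
    Matrix (Option V) (Option V) (Polynomial ℝ) := fun i j =>
  match i, j with
  | none, none => 0
  | none, some _ => 1
  | some _, none => 1
  | some u, some v => if u = v then 0 else if G.Adj u v then 1 else Polynomial.X

/-- The Cayley–Menger polynomial `C_G(t)`. -/
def CG {V : Type*} [Fintype V] (G : SimpleGraph V) : Polynomial ℝ :=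
  (cmMatrix G).det

/-- The matrix defining `M_G`. -/
def mMatrix {V : Type*} [Fintype V] (G : SimpleGraph V) :
    Matrix V V (Polynomial ℝ) := fun u v =>
  if u = v then 0 else if G.Adj u v then 1 else Polynomial.X

/-- The polynomial `M_G(t)`. -/
def MG {V : Type*} [Fintype V] (G : SimpleGraph V) : Polynomial ℝ :=
  (mMatrix G).det

/-- `C_G` has a root greater than `1` (i.e. `τ₁(G) < ∞`). -/
def HasTau {V : Type*} [Fintype V] (G : SimpleGraph V) : Prop :=
  ∃ t : ℝ, 1 < t ∧ (CG G).eval t = 0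

/-- `τ₁(G)`: the smallest root of `C_G` greater than `1` (junk value if none exists). -/
def tau1 {V : Type*} [Fintype V] (G : SimpleGraph V) : ℝ :=
  sInf {t : ℝ | 1 < t ∧ (CG G).eval t = 0}

/-- `μ(G)`: the multiplicity of `τ₁(G)` as a root of `C_G`, and `0` if `C_G` has no
root greater than `1`. -/
def muG {V : Type*} [Fintype V] (G : SimpleGraph V) : ℕ :=
  if HasTau G then (CG G).rootMultiplicity (tau1 G) else 0

/-- `F_G = -M_G / (2 C_G)`, viewed as a rational function of `t`. -/
def FG {V : Type*} [Fintype V] (G : SimpleGraph V) : RatFunc ℝ :=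
  RatFunc.mk (-(MG G)) (2 * CG G)

/-- The rational function `F_G` has no pole at `τ₁(G)`: the denominator of the reduced
fraction does not vanish there. -/
def NoPoleAtTau {V : Type*} [Fintype V] (G : SimpleGraph V) : Prop :=
  (FG G).denom.eval (tau1 G) ≠ 0

/-- The value `F_G(τ₁(G))` of the rational function `F_G` at `τ₁(G)`. -/
def FGtau {V : Type*} [Fintype V] (G : SimpleGraph V) : ℝ :=
  (FG G).eval (RingHom.id ℝ) (tau1 G)

/-- The circumradius `R(G)` is finite: `τ₁(G) < ∞` and `F_G` has no pole at `τ₁(G)`.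
(Then `R(G) = √(F_G(τ₁(G)))`.) -/
def RGfin {V : Type*} [Fintype V] (G : SimpleGraph V) : Prop :=
  HasTau G ∧ NoPoleAtTau G

/-- The value of `F_G` at a point `t` which is not a root of `C_G`. -/
def FGval {V : Type*} [Fintype V] (G : SimpleGraph V) (t : ℝ) : ℝ :=
  -((MG G).eval t) / (2 * (CG G).eval t)

/-- `dim^S_2(G, R₀)`: the smallest `d` such that `G` has a two-distance representation in
`ℝ^d` with distances `1` and `b` whose image lies on a sphere of radius at most `R₀`. -/
def dimS2R {V : Type*} (G : SimpleGraph V) (R₀ : ℝ) : ℕ :=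
  sInf {d | ∃ (f : V → EuclideanSpace ℝ (Fin d)) (b : ℝ)
      (c : EuclideanSpace ℝ (Fin d)) (r : ℝ),
    IsTwoDistRep G f 1 b ∧ r ≤ R₀ ∧ ∀ v, dist c (f v) = r}

/-- The join of two graphs: their disjoint union together with all edges between the parts. -/
def graphJoin {V₁ V₂ : Type} (G₁ : SimpleGraph V₁) (G₂ : SimpleGraph V₂) :
    SimpleGraph (V₁ ⊕ V₂) :=
  SimpleGraph.fromRel fun x y =>
    (∃ a b, x = Sum.inl a ∧ y = Sum.inl b ∧ G₁.Adj a b) ∨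
    (∃ a b, x = Sum.inr a ∧ y = Sum.inr b ∧ G₂.Adj a b) ∨
    (∃ a b, x = Sum.inl a ∧ y = Sum.inr b)

/-- The join of a family of graphs: two vertices are adjacent iff they lie in different
summands or are adjacent within their common summand. -/
def familyJoin {ι : Type*} {V : ι → Type*} (G : ∀ i, SimpleGraph (V i)) :
    SimpleGraph (Σ i, V i) :=
  SimpleGraph.fromRel fun x y =>
    x.1 ≠ y.1 ∨ ∃ h : x.1 = y.1, (G y.1).Adj (h ▸ x.2) y.2

/-- A graph is join-indecomposable if it is not isomorphic to a join of two graphs,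
each having at least one vertex. -/
def JoinIndecomposable {V : Type} (G : SimpleGraph V) : Prop :=
  ¬ ∃ (V₁ V₂ : Type) (G₁ : SimpleGraph V₁) (G₂ : SimpleGraph V₂),
      Nonempty V₁ ∧ Nonempty V₂ ∧ Nonempty (G ≃g graphJoin G₁ G₂)

/-- `S` is of Type I in the linear subspace `L`: all points have norm `1`,
`|S| = dim L + 1`, the affine hull of `S` has dimension `dim L`, and the origin lies in the
relative interior of the convex hull of `S`. -/
def TypeI {d : ℕ} (L : Submodule ℝ (EuclideanSpace ℝ (Fin d)))
    (S : Finset (EuclideanSpace ℝ (Fin d))) : Prop :=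
  (↑S : Set (EuclideanSpace ℝ (Fin d))) ⊆ (L : Set (EuclideanSpace ℝ (Fin d))) ∧
  (∀ p ∈ S, ‖p‖ = 1) ∧
  S.card = Module.finrank ℝ L + 1 ∧
  Module.finrank ℝ (affineSpan ℝ (↑S : Set (EuclideanSpace ℝ (Fin d)))).direction =
    Module.finrank ℝ L ∧
  (0 : EuclideanSpace ℝ (Fin d)) ∈
    intrinsicInterior ℝ (convexHull ℝ (↑S : Set (EuclideanSpace ℝ (Fin d))))

/-- `S` is of Type II in the linear subspace `L`: all points have norm `1`,
`|S| = dim L`, the affine hull of `S` has dimension `dim L - 1`, and the origin does not lie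
in the affine hull of `S`. -/
def TypeII {d : ℕ} (L : Submodule ℝ (EuclideanSpace ℝ (Fin d)))
    (S : Finset (EuclideanSpace ℝ (Fin d))) : Prop :=
  (↑S : Set (EuclideanSpace ℝ (Fin d))) ⊆ (L : Set (EuclideanSpace ℝ (Fin d))) ∧
  (∀ p ∈ S, ‖p‖ = 1) ∧
  S.card = Module.finrank ℝ L ∧
  Module.finrank ℝ (affineSpan ℝ (↑S : Set (EuclideanSpace ℝ (Fin d)))).direction =
    Module.finrank ℝ L - 1 ∧
  (0 : EuclideanSpace ℝ (Fin d)) ∉ affineSpan ℝ (↑S : Set (EuclideanSpace ℝ (Fin d)))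

/-- A J-spherical two-distance (JSTD) set with second distance `b`: a finite set on the unit
sphere centered at the origin whose pairwise distances take exactly the two values `√2` and
`b`, where `b > √2`. -/
def IsJSTD {d : ℕ} (S : Finset (EuclideanSpace ℝ (Fin d))) (b : ℝ) : Prop :=
  (∀ p ∈ S, ‖p‖ = 1) ∧ Real.sqrt 2 < b ∧
  (∀ p ∈ S, ∀ q ∈ S, p ≠ q → dist p q = Real.sqrt 2 ∨ dist p q = b) ∧
  (∃ p ∈ S, ∃ q ∈ S, dist p q = Real.sqrt 2) ∧
  (∃ p ∈ S, ∃ q ∈ S, dist p q = b)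

namespace JSpherAux

open Matrix Finset

variable {n : ℕ} (G : SimpleGraph (Fin n))

/-- indicator matrix of non-adjacent distinct pairs -/
def Abar : Matrix (Fin n) (Fin n) ℝ :=
  Matrix.of fun i j => if i = j then 0 else if G.Adj i j then 0 else 1

/-- the putative Gram matrix at parameter `t` -/
def Qmat (t : ℝ) : Matrix (Fin n) (Fin n) ℝ :=
  Matrix.of fun i j => if i = j then 1 else if G.Adj i j then 0 else 1 - t

lemma Qmat_eq (t : ℝ) : Qmat G t = 1 - (t - 1) • Abar G := by
  ext i j
  by_cases h : i = j
  · subst h; simp [Qmat, Abar, Matrix.one_apply]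
  · by_cases ha : G.Adj i j <;>
      simp [Qmat, Abar, Matrix.one_apply, h, ha]

lemma Qmat_symm (t : ℝ) (i j : Fin n) : Qmat G t j i = Qmat G t i j := by
  unfold Qmat
  by_cases h : i = j
  · subst h; simp
  · simp only [Matrix.of_apply, if_neg h, if_neg (Ne.symm h)]
    rw [G.adj_comm]

/-- quadratic form of `Qmat` -/
def qf (t : ℝ) (x : Fin n → ℝ) : ℝ := x ⬝ᵥ (Qmat G t *ᵥ x)

lemma qf_eq (t : ℝ) (x : Fin n → ℝ) :
    qf G t x = x ⬝ᵥ x - (t - 1) * (x ⬝ᵥ (Abar G *ᵥ x)) := by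
  simp [qf, Qmat_eq, Matrix.sub_mulVec, Matrix.smul_mulVec,
    dotProduct_sub, dotProduct_smul, smul_eq_mul]

lemma abar_form_le (x : Fin n → ℝ) :
    x ⬝ᵥ (Abar G *ᵥ x) ≤ (n : ℝ) * (x ⬝ᵥ x) := by
  have hx : x ⬝ᵥ (Abar G *ᵥ x) = ∑ i, ∑ j, x i * (Abar G i j * x j) := by
    simp [dotProduct, Matrix.mulVec, Finset.mul_sum]
  have h1 : x ⬝ᵥ (Abar G *ᵥ x) ≤ ∑ i, ∑ j, |x i| * |x j| := by
    rw [hx]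
    refine Finset.sum_le_sum fun i _ => Finset.sum_le_sum fun j _ => ?_
    have hA : Abar G i j = 0 ∨ Abar G i j = 1 := by
      unfold Abar; simp only [Matrix.of_apply]; split_ifs <;> simp
    rcases hA with hA | hA
    · rw [hA, zero_mul, mul_zero]; positivity
    · rw [hA, one_mul]
      calc x i * x j ≤ |x i * x j| := le_abs_self _
      _ = |x i| * |x j| := abs_mul _ _
  have h2 : ∑ i, ∑ j, |x i| * |x j| = (∑ i, |x i|) ^ 2 := by
    rw [sq, Finset.sum_mul_sum]
  have h3 : (∑ i : Fin n, |x i|) ^ 2 ≤ (n : ℝ) * ∑ i, |x i| ^ 2 := by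
    simpa using sq_sum_le_card_mul_sum_sq (s := (Finset.univ : Finset (Fin n)))
      (f := fun i => |x i|)
  have h4 : ∑ i : Fin n, |x i| ^ 2 = x ⬝ᵥ x := by
    simp [dotProduct, sq_abs, sq]
  rw [h4] at h3
  linarith

lemma dot_self_nonneg (x : Fin n → ℝ) : 0 ≤ x ⬝ᵥ x :=
  Finset.sum_nonneg fun i _ => mul_self_nonneg (x i)

lemma dot_self_pos {x : Fin n → ℝ} (hx : x ≠ 0) : 0 < x ⬝ᵥ x := by
  rcases lt_or_eq_of_le (dot_self_nonneg x) with h | h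
  · exact h
  · exact absurd (dotProduct_self_eq_zero.mp h.symm) hx

/-- the set of parameters `t ≥ 1` where `Qmat` is positive semidefinite -/
def TT : Set ℝ := {t : ℝ | 1 ≤ t ∧ ∀ x : Fin n → ℝ, 0 ≤ qf G t x}

lemma one_mem_TT : (1 : ℝ) ∈ TT G := by
  refine ⟨le_refl _, fun x => ?_⟩
  rw [qf_eq]
  simpa using dot_self_nonneg x

lemma mem_TT_small (hn : 0 < n) : (1 + 1/(n:ℝ)) ∈ TT G := by
  have hnR : (0:ℝ) < n := by exact_mod_cast hn
  have h0 : (0:ℝ) ≤ 1/(n:ℝ) := by positivity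
  refine ⟨by linarith, fun x => ?_⟩
  rw [qf_eq]
  have h := abar_form_le G x
  have : (1 + 1/(n:ℝ) - 1) * (x ⬝ᵥ Abar G *ᵥ x) ≤ x ⬝ᵥ x := by
    have h1 : (1 + 1/(n:ℝ) - 1) = 1/(n:ℝ) := by ring
    rw [h1]
    calc 1/(n:ℝ) * (x ⬝ᵥ Abar G *ᵥ x) ≤ 1/(n:ℝ) * ((n:ℝ) * (x ⬝ᵥ x)) := by
          apply mul_le_mul_of_nonneg_left h (by positivity)
    _ = x ⬝ᵥ x := by field_simp
  linarith

lemma TT_le_two {u v : Fin n} (huv : u ≠ v) (hadj : ¬ G.Adj u v) :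
    ∀ t ∈ TT G, t ≤ 2 := by
  intro t ht
  set x : Fin n → ℝ := fun i => if i = u then 1 else if i = v then 1 else 0 with hxdef
  have key : ∀ w : Fin n → ℝ, w ⬝ᵥ x = w u + w v := by
    intro w
    have : ∀ j, w j * x j = (if j = u then w j else 0) + (if j = v then w j else 0) := by
      intro j
      by_cases h1 : j = u
      · subst h1; simp [hxdef, huv]
      · by_cases h2 : j = v <;> simp [hxdef, h1, h2, huv.symm]
    rw [dotProduct]
    calc ∑ j, w j * x j = ∑ j, ((if j = u then w j else 0) + (if j = v then w j else 0)) :=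
          Finset.sum_congr rfl fun j _ => this j
    _ = w u + w v := by rw [Finset.sum_add_distrib]; simp
  have hq : qf G t x = 4 - 2*t := by
    have hx : x ⬝ᵥ (Qmat G t *ᵥ x) = (Qmat G t *ᵥ x) ⬝ᵥ x := dotProduct_comm _ _
    rw [qf, hx, key]
    have h1 : (Qmat G t *ᵥ x) u = Qmat G t u u + Qmat G t u v := by
      rw [Matrix.mulVec, key]
    have h2 : (Qmat G t *ᵥ x) v = Qmat G t v u + Qmat G t v v := by
      rw [Matrix.mulVec, key]
    rw [h1, h2]
    have e1 : Qmat G t u u = 1 := by simp [Qmat]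
    have e2 : Qmat G t v v = 1 := by simp [Qmat]
    have e3 : Qmat G t u v = 1 - t := by
      simp [Qmat, huv, hadj]
    have e4 : Qmat G t v u = 1 - t := by
      rw [Qmat_symm]; exact e3
    rw [e1, e2, e3, e4]; ring
  have := ht.2 x
  rw [hq] at this
  linarith

/-- symmetry of the bilinear form -/
lemma form_symm (t : ℝ) (v w : Fin n → ℝ) :
    v ⬝ᵥ (Qmat G t *ᵥ w) = w ⬝ᵥ (Qmat G t *ᵥ v) := by
  calc v ⬝ᵥ (Qmat G t *ᵥ w) = ∑ i, ∑ j, v i * (Qmat G t i j * w j) := by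
        simp [dotProduct, Matrix.mulVec, Finset.mul_sum]
  _ = ∑ j, ∑ i, w j * (Qmat G t j i * v i) := by
        rw [Finset.sum_comm]
        refine Finset.sum_congr rfl fun j _ => Finset.sum_congr rfl fun i _ => ?_
        rw [Qmat_symm]; ring
  _ = w ⬝ᵥ (Qmat G t *ᵥ v) := by
        simp [dotProduct, Matrix.mulVec, Finset.mul_sum]


/-- the critical parameter -/
def tstar : ℝ := sSup (TT G)

section TStar

variable {G} (hnontriv : ∃ u v : Fin n, u ≠ v ∧ ¬ G.Adj u v) (hn : 0 < n)

include hnontriv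

lemma TT_bddAbove : BddAbove (TT G) := by
  obtain ⟨u, v, huv, hadj⟩ := hnontriv
  exact ⟨2, fun t ht => TT_le_two G huv hadj t ht⟩

lemma tstar_le_two : tstar G ≤ 2 := by
  obtain ⟨u, v, huv, hadj⟩ := hnontriv
  exact csSup_le ⟨1, one_mem_TT G⟩ (TT_le_two G huv hadj)

include hn

lemma lt_tstar : 1 < tstar G := by
  have h1 : (1 + 1/(n:ℝ)) ≤ tstar G :=
    le_csSup (TT_bddAbove hnontriv) (mem_TT_small G hn)
  have hnR : (0:ℝ) < n := by exact_mod_cast hn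
  have : (0:ℝ) < 1/(n:ℝ) := by positivity
  linarith

lemma tstar_mem : tstar G ∈ TT G := by
  have h1 : 1 ≤ tstar G := le_of_lt (lt_tstar hnontriv hn)
  refine ⟨h1, fun x => ?_⟩
  rw [qf_eq]
  set c := x ⬝ᵥ x with hc
  set d := x ⬝ᵥ (Abar G *ᵥ x) with hd
  have hc0 : 0 ≤ c := dot_self_nonneg x
  rcases le_or_gt d 0 with hd0 | hd0
  · nlinarith
  · -- tstar ≤ 1 + c/d
    have hub : tstar G ≤ 1 + c/d := by
      apply csSup_le ⟨1, one_mem_TT G⟩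
      intro t ht
      have := ht.2 x
      rw [qf_eq] at this
      rw [← hc, ← hd] at this
      have h2 : (t - 1) * d ≤ c := by linarith
      have h3 : t - 1 ≤ c / d := (le_div_iff₀ hd0).mpr h2
      linarith
    have h4 : (tstar G - 1) * d ≤ c := by
      have h5 : tstar G - 1 ≤ c / d := by linarith
      calc (tstar G - 1) * d ≤ (c/d) * d := mul_le_mul_of_nonneg_right h5 (le_of_lt hd0)
      _ = c := by field_simp
    linarith

lemma qf_pos_of_lt_tstar {s : ℝ} (hs1 : 1 < s) (hs2 : s < tstar G)
    {x : Fin n → ℝ} (hx : x ≠ 0) : 0 < qf G s x := by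
  have hts := (tstar_mem hnontriv hn).2 x
  rw [qf_eq] at hts ⊢
  set c := x ⬝ᵥ x with hc
  set d := x ⬝ᵥ (Abar G *ᵥ x) with hd
  have hc0 : 0 < c := dot_self_pos hx
  rcases le_or_gt d 0 with hd0 | hd0
  · nlinarith
  · nlinarith

lemma det_ne_zero_of_lt_tstar {s : ℝ} (hs1 : 1 < s) (hs2 : s < tstar G) :
    (Qmat G s).det ≠ 0 := by
  intro hdet
  obtain ⟨v, hv0, hv⟩ := (Matrix.exists_mulVec_eq_zero_iff).mpr hdet
  have := qf_pos_of_lt_tstar hnontriv hn hs1 hs2 hv0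
  rw [qf, hv] at this
  simp at this

end TStar

/-- if the form is PSD and vanishes at `x`, then `x` is in the kernel -/
lemma mulVec_eq_zero_of_qf_eq_zero {t : ℝ} (hpsd : ∀ y, 0 ≤ qf G t y)
    {x : Fin n → ℝ} (hx : qf G t x = 0) : Qmat G t *ᵥ x = 0 := by
  funext i
  set Q := Qmat G t with hQ
  set b := (Q *ᵥ x) i with hb
  set u : Fin n → ℝ := Pi.single i 1 with hu
  set a := qf G t u with ha
  have ha0 : 0 ≤ a := hpsd u
  have hexp : ∀ c : ℝ, qf G t (x + c • u) = 2*c*b + c^2*a := by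
    intro c
    have h1 : qf G t (x + c • u)
        = qf G t x + c * (x ⬝ᵥ (Q *ᵥ u)) + c * (u ⬝ᵥ (Q *ᵥ x)) + c^2 * qf G t u := by
      unfold qf
      simp only [Matrix.mulVec_add, Matrix.mulVec_smul, dotProduct_add, add_dotProduct,
        dotProduct_smul, smul_dotProduct, smul_eq_mul, ← hQ]
      ring
    have h2 : x ⬝ᵥ (Q *ᵥ u) = u ⬝ᵥ (Q *ᵥ x) := form_symm G t x u
    have h3 : u ⬝ᵥ (Q *ᵥ x) = b := by
      rw [hu, hb, single_dotProduct, one_mul]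
    rw [h1, h2, h3, hx, ← ha]; ring
  have hkey := hpsd (x + (-b/(a+1)) • u)
  rw [hexp] at hkey
  have ha1 : 0 < a + 1 := by linarith
  have h7 : 0 ≤ (a+1)^2 * (2 * (-b / (a + 1)) * b + (-b / (a + 1)) ^ 2 * a) :=
    mul_nonneg (sq_nonneg _) hkey
  have h8 : (a+1)^2 * (2 * (-b / (a + 1)) * b + (-b / (a + 1)) ^ 2 * a)
      = -(b^2)*(a+2) := by field_simp; ring
  rw [h8] at h7
  have hb0 : b = 0 := by nlinarith [sq_nonneg b]
  simpa using hb0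


lemma qf_smul (t : ℝ) (c : ℝ) (x : Fin n → ℝ) : qf G t (c • x) = c^2 * qf G t x := by
  simp only [qf, Matrix.mulVec_smul, dotProduct_smul, smul_dotProduct, smul_eq_mul]
  ring

lemma qf_continuous (t : ℝ) : Continuous (qf G t) := by
  have h : qf G t = fun x : Fin n → ℝ => ∑ i, x i * ∑ j, Qmat G t i j * x j := by
    funext x
    simp [qf, dotProduct, Matrix.mulVec]
  rw [h]
  exact continuous_finset_sum _ fun i _ =>
    (continuous_apply i).mul
      (continuous_finset_sum _ fun j _ => continuous_const.mul (continuous_apply j))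

lemma det_tstar_eq_zero {G : SimpleGraph (Fin n)}
    (hnontriv : ∃ u v : Fin n, u ≠ v ∧ ¬ G.Adj u v) (hn : 0 < n) :
    (Qmat G (tstar G)).det = 0 := by
  by_contra hdet
  have hpsd := (tstar_mem hnontriv hn).2
  set K : Set (Fin n → ℝ) := {x | x ⬝ᵥ x = 1} with hK
  have hdotcont : Continuous fun x : Fin n → ℝ => x ⬝ᵥ x :=
    continuous_finset_sum _ fun i _ => (continuous_apply i).mul (continuous_apply i)
  have hKc : IsClosed K := isClosed_eq hdotcont continuous_const
  have hKb : K ⊆ Metric.closedBall 0 1 := by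
    intro x hx
    rw [Metric.mem_closedBall, dist_zero_right]
    rw [pi_norm_le_iff_of_nonneg (by norm_num : (0:ℝ) ≤ 1)]
    intro i
    rw [Real.norm_eq_abs, abs_le_one_iff_mul_self_le_one]
    have h1 : x i * x i ≤ ∑ j, x j * x j :=
      Finset.single_le_sum (fun j _ => mul_self_nonneg (x j)) (Finset.mem_univ i)
    have h2 : x ⬝ᵥ x = ∑ j, x j * x j := rfl
    have := hx
    rw [hK] at this
    simp only [Set.mem_setOf_eq] at this
    rw [h2] at this
    linarith
  have hKcomp : IsCompact K :=
    (isCompact_closedBall (0 : Fin n → ℝ) 1).of_isClosed_subset hKc hKb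
  have hKne : K.Nonempty := by
    refine ⟨Pi.single ⟨0, hn⟩ 1, ?_⟩
    simp only [hK, Set.mem_setOf_eq, dotProduct_single, mul_one]
    simp
  obtain ⟨x₀, hx₀, hmin⟩ :=
    hKcomp.exists_isMinOn hKne (qf_continuous G (tstar G)).continuousOn
  set δ := qf G (tstar G) x₀ with hδ
  have hx₀1 : x₀ ⬝ᵥ x₀ = 1 := hx₀
  have hx₀0 : x₀ ≠ 0 := by
    intro h
    rw [h] at hx₀1
    simp at hx₀1
  have hδpos : 0 < δ := by
    rcases lt_or_eq_of_le (hpsd x₀) with h | h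
    · exact h
    · exfalso
      have hker := mulVec_eq_zero_of_qf_eq_zero G hpsd h.symm
      have : (Qmat G (tstar G)).det = 0 :=
        (Matrix.exists_mulVec_eq_zero_iff).mp ⟨x₀, hx₀0, hker⟩
      exact hdet this
  have hlow : ∀ x : Fin n → ℝ, δ * (x ⬝ᵥ x) ≤ qf G (tstar G) x := by
    intro x
    by_cases hx : x = 0
    · subst hx
      simp [qf]
    · set r := Real.sqrt (x ⬝ᵥ x) with hr
      have hxx : 0 < x ⬝ᵥ x := dot_self_pos hx
      have hrpos : 0 < r := Real.sqrt_pos.mpr hxx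
      have hr2 : r^2 = x ⬝ᵥ x := Real.sq_sqrt (le_of_lt hxx)
      have humem : (r⁻¹ • x) ∈ K := by
        simp only [hK, Set.mem_setOf_eq, smul_dotProduct, dotProduct_smul, smul_eq_mul]
        rw [← mul_assoc]
        rw [← hr2]; field_simp
      have h1 : δ ≤ qf G (tstar G) (r⁻¹ • x) := hmin humem
      rw [qf_smul] at h1
      have h2 : (r⁻¹)^2 = (x ⬝ᵥ x)⁻¹ := by
        rw [inv_pow, hr2]
      rw [h2] at h1
      calc δ * (x ⬝ᵥ x) ≤ ((x ⬝ᵥ x)⁻¹ * qf G (tstar G) x) * (x ⬝ᵥ x) :=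
            mul_le_mul_of_nonneg_right h1 (le_of_lt hxx)
      _ = qf G (tstar G) x := by field_simp
  -- now push beyond tstar
  have hnR : (0:ℝ) < n := by exact_mod_cast hn
  set ε := δ / n with hε
  have hεpos : 0 < ε := by positivity
  have hmem : tstar G + ε ∈ TT G := by
    have h1 : 1 ≤ tstar G := le_of_lt (lt_tstar hnontriv hn)
    refine ⟨by linarith, fun x => ?_⟩
    have hq1 : qf G (tstar G + ε) x = qf G (tstar G) x - ε * (x ⬝ᵥ (Abar G *ᵥ x)) := by
      rw [qf_eq, qf_eq]; ring
    have h2 : x ⬝ᵥ (Abar G *ᵥ x) ≤ (n:ℝ) * (x ⬝ᵥ x) := abar_form_le G x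
    have h3 : δ * (x ⬝ᵥ x) ≤ qf G (tstar G) x := hlow x
    have h4 : ε * (x ⬝ᵥ (Abar G *ᵥ x)) ≤ ε * ((n:ℝ) * (x ⬝ᵥ x)) :=
      mul_le_mul_of_nonneg_left h2 (le_of_lt hεpos)
    have h5 : ε * ((n:ℝ) * (x ⬝ᵥ x)) = δ * (x ⬝ᵥ x) := by
      rw [hε]; field_simp
    rw [hq1]
    linarith
  have := le_csSup (TT_bddAbove hnontriv) hmem
  unfold tstar at this
  linarith


/-- Gram decomposition of a singular PSD matrix of size `m+2` by vectors in `ℝ^{m+1}`. -/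
lemma exists_gram {m : ℕ} (Q : Matrix (Fin (m+2)) (Fin (m+2)) ℝ)
    (hQ : Q.PosSemidef) (hdet : Q.det = 0) :
    ∃ f : Fin (m+2) → EuclideanSpace ℝ (Fin (m+1)),
      ∀ i j, ∑ l, f i l * f j l = Q i j := by
  have hH := hQ.1
  set U : Matrix (Fin (m+2)) (Fin (m+2)) ℝ := hH.eigenvectorUnitary.1 with hU
  set ξ := hH.eigenvalues with hξ
  have hξ0 : ∀ k, 0 ≤ ξ k := hQ.eigenvalues_nonneg
  have hent : ∀ i j, Q i j = ∑ k, U i k * ξ k * U j k := by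
    intro i j
    conv_lhs => rw [hH.spectral_theorem]
    rw [Unitary.conjStarAlgAut_apply]
    rw [Matrix.mul_apply]
    refine Finset.sum_congr rfl fun k _ => ?_
    rw [Matrix.mul_diagonal]
    simp [hU, hξ, Matrix.star_apply, RCLike.ofReal_real_eq_id]
  have hzero : ∃ k, ξ k = 0 := by
    have h := hH.det_eq_prod_eigenvalues
    rw [hdet] at h
    have h2 : ∏ k, ξ k = 0 := by exact_mod_cast h.symm
    obtain ⟨k, _, hk⟩ := Finset.prod_eq_zero_iff.mp h2
    exact ⟨k, hk⟩
  obtain ⟨k₀, hk₀⟩ := hzero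
  refine ⟨fun i => (WithLp.toLp 2 (fun l => U i (k₀.succAbove l) * Real.sqrt (ξ (k₀.succAbove l))) :
      EuclideanSpace ℝ (Fin (m+1))), fun i j => ?_⟩
  have hsum := Fin.sum_univ_succAbove
    (fun k => (U i k * Real.sqrt (ξ k)) * (U j k * Real.sqrt (ξ k))) k₀
  have hterm : ∀ k, (U i k * Real.sqrt (ξ k)) * (U j k * Real.sqrt (ξ k))
      = U i k * ξ k * U j k := by
    intro k
    have : Real.sqrt (ξ k) * Real.sqrt (ξ k) = ξ k := Real.mul_self_sqrt (hξ0 k)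
    calc (U i k * Real.sqrt (ξ k)) * (U j k * Real.sqrt (ξ k))
        = (Real.sqrt (ξ k) * Real.sqrt (ξ k)) * (U i k * U j k) := by ring
    _ = ξ k * (U i k * U j k) := by rw [this]
    _ = U i k * ξ k * U j k := by ring
  calc ∑ l, (U i (k₀.succAbove l) * Real.sqrt (ξ (k₀.succAbove l)))
          * (U j (k₀.succAbove l) * Real.sqrt (ξ (k₀.succAbove l)))
      = (∑ k, (U i k * Real.sqrt (ξ k)) * (U j k * Real.sqrt (ξ k)))
        - (U i k₀ * Real.sqrt (ξ k₀)) * (U j k₀ * Real.sqrt (ξ k₀)) := by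
        rw [hsum]; ring
  _ = ∑ k, U i k * ξ k * U j k := by
        rw [hk₀]
        simp only [Real.sqrt_zero, mul_zero, zero_mul, sub_zero]
        exact Finset.sum_congr rfl fun k _ => hterm k
  _ = Q i j := (hent i j).symm


lemma uniqueness_core {t₁ t₂ : ℝ} (h1 : 1 < t₁) (h12 : t₁ < t₂)
    (hdet1 : (Qmat G t₁).det = 0) (hpsd2 : ∀ x, 0 ≤ qf G t₂ x) : False := by
  obtain ⟨v, hv0, hv⟩ := Matrix.exists_mulVec_eq_zero_iff.mpr hdet1
  have hq1 : qf G t₁ v = 0 := by rw [qf, hv]; simp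
  have hq2 := hpsd2 v
  rw [qf_eq] at hq1 hq2
  have hc : 0 < v ⬝ᵥ v := dot_self_pos hv0
  set c := v ⬝ᵥ v with hcdef
  set d := v ⬝ᵥ (Abar G *ᵥ v) with hddef
  have h3 : (t₂ - t₁) * d ≤ 0 := by nlinarith
  have hd : d ≤ 0 := by
    by_contra hdpos
    push_neg at hdpos
    have := mul_pos (sub_pos.mpr h12) hdpos
    linarith
  have hcle : c ≤ 0 := by
    nlinarith [mul_nonneg (le_of_lt (sub_pos.mpr h1)) (neg_nonneg.mpr hd)]
  linarith


lemma rep_gram {d : ℕ} (f : Fin n → EuclideanSpace ℝ (Fin d)) {b : ℝ}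
    (hrep : IsTwoDistRep G f (Real.sqrt 2) b) (hnorm : ∀ v, ‖f v‖ = 1) :
    ∀ i j, Qmat G (b^2/2) i j = ⟪f i, f j⟫ := by
  intro i j
  by_cases hij : i = j
  · subst hij
    rw [real_inner_self_eq_norm_sq, hnorm]
    simp [Qmat]
  · have hsub : ∀ D : ℝ, dist (f i) (f j) = D → ⟪f i, f j⟫ = (2 - D^2)/2 := by
      intro D hD
      have h1 : ‖f i - f j‖^2 = ‖f i‖^2 - 2*⟪f i, f j⟫ + ‖f j‖^2 := norm_sub_sq_real _ _
      rw [hnorm, hnorm] at h1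
      rw [← hD, dist_eq_norm, h1]
      ring
    by_cases ha : G.Adj i j
    · have := hsub _ (hrep.2.2.1 i j ha)
      rw [Real.sq_sqrt (by norm_num : (2:ℝ) ≥ 0)] at this
      simp [Qmat, hij, ha, this]
    · have := hsub _ (hrep.2.2.2 i j hij ha)
      simp [Qmat, hij, ha, this]
      ring

lemma rep_psd {d : ℕ} (f : Fin n → EuclideanSpace ℝ (Fin d)) {b : ℝ}
    (hrep : IsTwoDistRep G f (Real.sqrt 2) b) (hnorm : ∀ v, ‖f v‖ = 1) :
    ∀ x, 0 ≤ qf G (b^2/2) x := by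
  intro x
  have hgram := rep_gram G f hrep hnorm
  have hkey : qf G (b^2/2) x = ⟪(∑ i, x i • f i), (∑ j, x j • f j)⟫ := by
    rw [sum_inner]
    have h1 : ∀ i, ⟪x i • f i, (∑ j, x j • f j)⟫ = x i * ∑ j, x j * ⟪f i, f j⟫ := by
      intro i
      rw [real_inner_smul_left, inner_sum]
      congr 1
      exact Finset.sum_congr rfl fun j _ => real_inner_smul_right _ _ _
    rw [Finset.sum_congr rfl fun i _ => h1 i]
    simp only [qf, dotProduct, Matrix.mulVec]
    refine Finset.sum_congr rfl fun i _ => ?_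
    congr 1
    refine Finset.sum_congr rfl fun j _ => ?_
    rw [hgram i j]
    ring
  rw [hkey]
  exact real_inner_self_nonneg

lemma rep_singular {d : ℕ} (hd : d < n) (f : Fin n → EuclideanSpace ℝ (Fin d)) {b : ℝ}
    (hrep : IsTwoDistRep G f (Real.sqrt 2) b) (hnorm : ∀ v, ‖f v‖ = 1) :
    (Qmat G (b^2/2)).det = 0 := by
  have hgram := rep_gram G f hrep hnorm
  have hnli : ¬ LinearIndependent ℝ f := by
    intro h
    have hcard := h.fintype_card_le_finrank
    rw [finrank_euclideanSpace] at hcard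
    simp [Fintype.card_fin] at hcard
    omega
  obtain ⟨g, hgsum, i₀, hi₀⟩ := Fintype.not_linearIndependent_iff.mp hnli
  have hg0 : g ≠ 0 := fun h => hi₀ (by rw [h]; rfl)
  apply Matrix.exists_mulVec_eq_zero_iff.mp
  refine ⟨g, hg0, ?_⟩
  funext i
  have : (Qmat G (b^2/2) *ᵥ g) i = ⟪f i, (∑ j, g j • f j)⟫ := by
    rw [inner_sum, Matrix.mulVec]
    simp only [dotProduct]
    refine Finset.sum_congr rfl fun j _ => ?_
    rw [real_inner_smul_right, hgram i j]
    ring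
  show (Qmat G (b^2/2) *ᵥ g) i = 0
  rw [this, hgsum, inner_zero_right]


def optEquiv (α : Type*) : (Unit ⊕ α) ≃ Option α where
  toFun x := match x with | .inl _ => none | .inr i => some i
  invFun o := match o with | none => .inl ⟨⟩ | some i => .inr i
  left_inv := by rintro (x | x) <;> rfl
  right_inv := by rintro (_ | x) <;> rfl

lemma eval_det {k : Type*} [Fintype k] [DecidableEq k] (M : Matrix k k (Polynomial ℝ)) (s : ℝ) :
    (M.det).eval s = (M.map (Polynomial.evalRingHom s)).det := by
  have h := RingHom.map_det (Polynomial.evalRingHom s) M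
  rw [RingHom.mapMatrix_apply] at h
  rw [← h]
  simp [Polynomial.coe_evalRingHom]

set_option maxHeartbeats 2000000 in
lemma cg_eval (s : ℝ) (hdet : (Qmat G s).det ≠ 0) :
    (CG G).eval s
      = (-1)^n * ((Qmat G s).det
          * ((fun _ => (1:ℝ)) ⬝ᵥ ((Qmat G s)⁻¹ *ᵥ (fun _ => (1:ℝ))))) := by
  classical
  set Q := Qmat G s with hQdef
  haveI hinv : Invertible Q := Q.invertibleOfIsUnitDet (isUnit_iff_ne_zero.mpr hdet)
  set N : Matrix (Fin n) (Fin n) ℝ :=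
    Matrix.of (fun i j => if i = j then 0 else if G.Adj i j then 1 else s) with hN
  set row1 : Matrix Unit (Fin n) ℝ := Matrix.of fun _ _ => 1 with hrow1
  set col1 : Matrix (Fin n) Unit ℝ := Matrix.of fun _ _ => 1 with hcol1
  set colm1 : Matrix (Fin n) Unit ℝ := Matrix.of fun _ _ => -1 with hcolm1
  have h1 : (CG G).eval s = ((cmMatrix G).map (Polynomial.evalRingHom s)).det := by
    unfold CG
    convert eval_det (cmMatrix G) s using 2
    congr!
  set e := optEquiv (Fin n) with he
  have h2 : ((cmMatrix G).map (Polynomial.evalRingHom s)).det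
      = (((cmMatrix G).map (Polynomial.evalRingHom s)).submatrix e e).det :=
    (Matrix.det_submatrix_equiv_self e _).symm
  set Bt : Matrix (Unit ⊕ Fin n) (Unit ⊕ Fin n) ℝ :=
    Matrix.fromBlocks 0 row1 col1 N with hBt
  have h3 : ((cmMatrix G).map (Polynomial.evalRingHom s)).submatrix e e = Bt := by
    ext i j
    rcases i with i | i <;> rcases j with j | j <;>
      simp [Matrix.submatrix_apply, Matrix.map_apply, cmMatrix, he, optEquiv,
        hBt, hN, hrow1, hcol1, Matrix.fromBlocks, apply_ite (Polynomial.eval s)]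
  set L : Matrix (Unit ⊕ Fin n) (Unit ⊕ Fin n) ℝ :=
    Matrix.fromBlocks 1 0 col1 (-1) with hL
  have hdetL : L.det = (-1)^n := by
    rw [hL, Matrix.det_fromBlocks_zero₁₂, Matrix.det_one, one_mul, Matrix.det_neg,
      Matrix.det_one, mul_one, Fintype.card_fin]
  have h4 : L * Bt = Matrix.fromBlocks 0 row1 colm1 Q := by
    rw [hL, hBt, Matrix.fromBlocks_multiply]
    have hb11 : (1 : Matrix Unit Unit ℝ) * (0 : Matrix Unit Unit ℝ)
        + (0 : Matrix Unit (Fin n) ℝ) * col1 = 0 := by simp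
    have hb12 : (1 : Matrix Unit Unit ℝ) * row1 + (0 : Matrix Unit (Fin n) ℝ) * N
        = row1 := by simp
    have hb21 : col1 * (0 : Matrix Unit Unit ℝ)
        + (-1 : Matrix (Fin n) (Fin n) ℝ) * col1 = colm1 := by
      ext i j
      simp [hcol1, hcolm1]
    have hb22 : col1 * row1 + (-1 : Matrix (Fin n) (Fin n) ℝ) * N = Q := by
      ext i j
      rw [Matrix.add_apply, Matrix.mul_apply]
      have hone : ∑ (k : Unit), col1 i k * row1 k j = 1 := by simp [hcol1, hrow1]
      rw [hone, neg_one_mul, Matrix.neg_apply, hQdef]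
      by_cases hij : i = j
      · subst hij; simp [Qmat, hN]
      · by_cases ha : G.Adj i j
        · simp [Qmat, hN, hij, ha]
        · simp [Qmat, hN, hij, ha]
          ring
    rw [hb11, hb12, hb21, hb22]
  have hentry : ((0 : Matrix Unit Unit ℝ) - row1 * ⅟Q * colm1) () ()
      = (fun _ => (1:ℝ)) ⬝ᵥ (Q⁻¹ *ᵥ (fun _ => (1:ℝ))) := by
    rw [Matrix.sub_apply, Matrix.zero_apply, Matrix.invOf_eq_nonsing_inv]
    have hr : ∀ j, (row1 * Q⁻¹) () j = ∑ k, Q⁻¹ k j := by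
      intro j
      rw [Matrix.mul_apply]
      exact Finset.sum_congr rfl fun k _ => by simp [hrow1]
    have hm : (row1 * Q⁻¹ * colm1) () () = - ∑ j, ∑ k, Q⁻¹ k j := by
      rw [Matrix.mul_apply]
      calc ∑ j, (row1 * Q⁻¹) () j * colm1 j ()
          = ∑ j, -(∑ k, Q⁻¹ k j) := by
            refine Finset.sum_congr rfl fun j _ => ?_
            rw [hr j]
            simp [hcolm1]
      _ = - ∑ j, ∑ k, Q⁻¹ k j := by rw [← Finset.sum_neg_distrib]
    rw [hm]
    have : (fun _ => (1:ℝ)) ⬝ᵥ (Q⁻¹ *ᵥ (fun _ => (1:ℝ))) = ∑ k, ∑ j, Q⁻¹ k j := by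
      simp [dotProduct, Matrix.mulVec]
    rw [this, Finset.sum_comm]
    ring
  have h5 : (L * Bt).det
      = Q.det * ((fun _ => (1:ℝ)) ⬝ᵥ (Q⁻¹ *ᵥ (fun _ => (1:ℝ)))) := by
    rw [h4, Matrix.det_fromBlocks₂₂]
    congr 1
    rw [Matrix.det_unique]
    exact hentry
  have h6 : L.det * Bt.det = (L * Bt).det := (Matrix.det_mul L Bt).symm
  rw [hdetL, h5] at h6
  have h7 : ((-1:ℝ))^n * ((-1:ℝ))^n = 1 := by
    rw [← pow_add, ← two_mul, pow_mul]
    norm_num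
  calc (CG G).eval s = Bt.det := by rw [h1, h2, h3]
  _ = ((-1:ℝ))^n * ((-1:ℝ))^n * Bt.det := by rw [h7, one_mul]
  _ = (-1)^n * ((Q.det * ((fun _ => (1:ℝ)) ⬝ᵥ (Q⁻¹ *ᵥ (fun _ => (1:ℝ)))))) := by
      rw [mul_assoc, h6]


lemma one_dot_inv_pos {G : SimpleGraph (Fin n)}
    (hnontriv : ∃ u v : Fin n, u ≠ v ∧ ¬ G.Adj u v) (hn : 0 < n)
    {s : ℝ} (hs1 : 1 < s) (hs2 : s < tstar G) :
    0 < (fun _ => (1:ℝ)) ⬝ᵥ ((Qmat G s)⁻¹ *ᵥ (fun _ => (1:ℝ))) := by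
  have hdet := det_ne_zero_of_lt_tstar hnontriv hn hs1 hs2
  have hU : IsUnit (Qmat G s).det := isUnit_iff_ne_zero.mpr hdet
  set Q := Qmat G s with hQ
  set w := Q⁻¹ *ᵥ (fun _ => (1:ℝ)) with hw
  have hQw : Q *ᵥ w = (fun _ => (1:ℝ)) := by
    rw [hw, Matrix.mulVec_mulVec, Matrix.mul_nonsing_inv _ hU, Matrix.one_mulVec]
  have hw0 : w ≠ 0 := by
    intro h
    have h2 : Q *ᵥ w = 0 := by rw [h, Matrix.mulVec_zero]
    rw [hQw] at h2
    have := congrFun h2 ⟨0, hn⟩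
    norm_num at this
  have h1 : (fun _ => (1:ℝ)) ⬝ᵥ w = (Q *ᵥ w) ⬝ᵥ w := by rw [hQw]
  have h2 : (Q *ᵥ w) ⬝ᵥ w = w ⬝ᵥ (Q *ᵥ w) := dotProduct_comm _ _
  have h3 := qf_pos_of_lt_tstar hnontriv hn hs1 hs2 hw0
  rw [qf] at h3
  rw [h1, h2]
  exact h3

end JSpherAux

/-- Every non-complete graph on `n ≥ 2` vertices has a unique J-spherical
representation: there is exactly one `b > √2` with `C_G ≠ 0` on `(1, b²/2)` such that `G`
has a two-distance representation in `ℝ^{n-1}` with distances `√2` and `b` lying on the unit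
sphere centered at the origin. -/
theorem exists_unique_J_spherical (n : ℕ) (hn : 2 ≤ n) (G : SimpleGraph (Fin n))
    (hG : G ≠ ⊤) :
    ∃! b : ℝ, Real.sqrt 2 < b ∧
      (∀ s : ℝ, 1 < s → s < b ^ 2 / 2 → (CG G).eval s ≠ 0) ∧
      ∃ f : Fin n → EuclideanSpace ℝ (Fin (n - 1)),
        IsTwoDistRep G f (Real.sqrt 2) b ∧ ∀ v, ‖f v‖ = 1 := by
  classical
  obtain ⟨m, rfl⟩ : ∃ m, n = m + 2 := ⟨n - 2, by omega⟩
  have hn0 : 0 < m + 2 := by omega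
  have hnontriv : ∃ u v : Fin (m+2), u ≠ v ∧ ¬ G.Adj u v := by
    by_contra h
    push_neg at h
    apply hG
    ext u v
    simp only [SimpleGraph.top_adj]
    exact ⟨fun ha => ha.ne, fun hne => h u v hne⟩
  set t₀ := JSpherAux.tstar G with ht₀
  have h1t : 1 < t₀ := JSpherAux.lt_tstar hnontriv hn0
  have hpsd : ∀ x, 0 ≤ JSpherAux.qf G t₀ x := (JSpherAux.tstar_mem hnontriv hn0).2
  have hdet0 : (JSpherAux.Qmat G t₀).det = 0 := JSpherAux.det_tstar_eq_zero hnontriv hn0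
  set b₀ := Real.sqrt (2 * t₀) with hb₀
  have hb₀sq : b₀^2 = 2*t₀ := Real.sq_sqrt (by linarith)
  have hb₀pos : 0 < b₀ := Real.sqrt_pos.mpr (by linarith)
  have hsqrt2_lt : Real.sqrt 2 < b₀ := by
    apply Real.sqrt_lt_sqrt (by norm_num)
    linarith
  have hb2half : b₀^2/2 = t₀ := by rw [hb₀sq]; ring
  refine ⟨b₀, ⟨hsqrt2_lt, ?_, ?_⟩, ?_⟩
  · -- condition (i)
    intro s hs1 hs2
    rw [hb2half] at hs2
    have hdet := JSpherAux.det_ne_zero_of_lt_tstar hnontriv hn0 hs1 hs2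
    have hpos := JSpherAux.one_dot_inv_pos hnontriv hn0 hs1 hs2
    rw [JSpherAux.cg_eval G s hdet]
    intro h
    rcases mul_eq_zero.mp h with h' | h'
    · exact absurd h' (pow_ne_zero _ (by norm_num))
    · rcases mul_eq_zero.mp h' with h'' | h''
      · exact hdet h''
      · exact (ne_of_gt hpos) h''
  · -- condition (ii): existence of the representation
    have hherm : (JSpherAux.Qmat G t₀).IsHermitian := by
      rw [Matrix.IsHermitian]
      ext i j
      rw [Matrix.conjTranspose_apply]
      simp [JSpherAux.Qmat_symm]
    have hps : (JSpherAux.Qmat G t₀).PosSemidef := by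
      refine Matrix.PosSemidef.of_dotProduct_mulVec_nonneg hherm fun x => ?_
      have := hpsd x
      simpa [JSpherAux.qf] using this
    obtain ⟨f, hf⟩ := JSpherAux.exists_gram (JSpherAux.Qmat G t₀) hps hdet0
    have hnorm : ∀ v, ‖f v‖ = 1 := by
      intro v
      rw [EuclideanSpace.norm_eq]
      have h1 : ∑ l, ‖f v l‖^2 = 1 := by
        calc ∑ l, ‖f v l‖^2 = ∑ l, f v l * f v l := by
              refine Finset.sum_congr rfl fun l _ => ?_
              rw [Real.norm_eq_abs, sq_abs, sq]
        _ = JSpherAux.Qmat G t₀ v v := hf v v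
        _ = 1 := by simp [JSpherAux.Qmat]
      rw [h1, Real.sqrt_one]
    have hdist : ∀ u v, dist (f u) (f v)
        = Real.sqrt (2 - 2 * JSpherAux.Qmat G t₀ u v) := by
      intro u v
      rw [EuclideanSpace.dist_eq]
      congr 1
      have h1 : ∀ l, dist (f u l) (f v l)^2
          = f u l * f u l + f v l * f v l - 2*(f u l * f v l) := by
        intro l
        rw [Real.dist_eq, sq_abs]
        ring
      calc ∑ l, dist (f u l) (f v l)^2
          = ∑ l, (f u l * f u l + f v l * f v l - 2*(f u l * f v l)) :=
            Finset.sum_congr rfl fun l _ => h1 l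
      _ = (∑ l, f u l * f u l) + (∑ l, f v l * f v l) - 2*(∑ l, f u l * f v l) := by
            rw [Finset.sum_sub_distrib, Finset.sum_add_distrib, Finset.mul_sum]
      _ = JSpherAux.Qmat G t₀ u u + JSpherAux.Qmat G t₀ v v
            - 2 * JSpherAux.Qmat G t₀ u v := by rw [hf u u, hf v v, hf u v]
      _ = 2 - 2 * JSpherAux.Qmat G t₀ u v := by
            have e1 : JSpherAux.Qmat G t₀ u u = 1 := by simp [JSpherAux.Qmat]
            have e2 : JSpherAux.Qmat G t₀ v v = 1 := by simp [JSpherAux.Qmat]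
            rw [e1, e2]; ring
    refine ⟨f, ⟨Real.sqrt_pos.mpr (by norm_num), le_of_lt hsqrt2_lt, ?_, ?_⟩, hnorm⟩
    · intro u v huv
      rw [hdist u v]
      have : JSpherAux.Qmat G t₀ u v = 0 := by
        simp [JSpherAux.Qmat, huv.ne, huv]
      rw [this]
      norm_num
    · intro u v huv hadj
      rw [hdist u v]
      have : JSpherAux.Qmat G t₀ u v = 1 - t₀ := by
        simp [JSpherAux.Qmat, huv, hadj]
      rw [this, hb₀]
      congr 1
      ring
  · -- uniqueness
    rintro b' ⟨hb'gt, _, f', hrep', hnorm'⟩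
    have hb'pos : 0 < b' := lt_trans (Real.sqrt_pos.mpr (by norm_num)) hb'gt
    have h2b : (2:ℝ) < b'^2 := by
      have h1 : (Real.sqrt 2)^2 < b'^2 :=
        pow_lt_pow_left₀ hb'gt (Real.sqrt_nonneg 2) (by norm_num)
      rwa [Real.sq_sqrt (by norm_num : (2:ℝ) ≥ 0)] at h1
    have h1t' : 1 < b'^2/2 := by linarith
    have hpsd' := JSpherAux.rep_psd G f' hrep' hnorm'
    have hdet' := JSpherAux.rep_singular G (show m+2-1 < m+2 by omega) f' hrep' hnorm'
    have hteq : b'^2/2 = t₀ := by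
      by_contra hne
      rcases lt_or_gt_of_ne hne with h | h
      · exact JSpherAux.uniqueness_core G h1t' h hdet' hpsd
      · exact JSpherAux.uniqueness_core G h1t h hdet0 hpsd'
    have hb'sq : b'^2 = 2*t₀ := by
      rw [← hteq]; ring
    calc b' = Real.sqrt (b'^2) := (Real.sqrt_sq hb'pos.le).symm
    _ = b₀ := by rw [hb'sq]
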